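/- Let q be a prime, N ≥ 1, d ≥ 0, and let F be an N-variate polynomial over F_q whose degree in each variable is at most d. Let a ∈ F_q with Σ_{x ∈ {0,1}^N} F(x) ≠ a. Then for every prover strategy (g_i)_{1≤i≤N}, the probability, over a uniformly random point (r₁,…,r_N) ∈ F_q^N, that all of the following checks pass is at most N·d/q: (i) g₁(0) + g₁(1) = a; (ii) for every 2 ≤ i ≤ N, g_i(r₁,…,r_{i−1})(0) + g_i(r₁,…,r_{i−1})(1) = g_{i−1}(r₁,…,r_{i−2})(r_{i−1}); and (iii) g_N(r₁,…,r_{N−1})(r_N) = F(r₁,…,r_N). -/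

import Mathlib

open Polynomial Finset

section Dev

variable {q N d : ℕ}

/-- boolean value as field element -/
def bval (q : ℕ) (b : Bool) : ZMod q := if b then 1 else 0

/-- boolean vectors that are `false` on the first `k` coordinates -/
def Bset (N k : ℕ) : Finset (Fin N → Bool) :=
  Finset.univ.filter (fun b => ∀ j : Fin N, j.val < k → b j = false)

/-- partial sum of `F` over boolean suffixes, prefix `r`, round `i` kept as variable -/
noncomputable def Spoly (q : ℕ) (F : MvPolynomial (Fin N) (ZMod q)) (i : Fin N)
    (r : Fin N → ZMod q) : Polynomial (ZMod q) :=
  ∑ b ∈ Bset N (i.val + 1), MvPolynomial.eval₂ Polynomial.C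
    (fun j => if j.val < i.val then Polynomial.C (r j)
      else if j = i then Polynomial.X else Polynomial.C (bval q (b j))) F

/-- the honest value after `k` rounds -/
noncomputable def Tval (q : ℕ) (F : MvPolynomial (Fin N) (ZMod q)) (k : ℕ)
    (r : Fin N → ZMod q) : ZMod q :=
  ∑ b ∈ Bset N k, MvPolynomial.eval (fun j => if j.val < k then r j else bval q (b j)) F

lemma evalpt {f g : Fin N → ZMod q} (F : MvPolynomial (Fin N) (ZMod q))
    (h : ∀ j, f j = g j) : MvPolynomial.eval f F = MvPolynomial.eval g F := by
  rw [show f = g from funext h]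

lemma eval_Spoly (F : MvPolynomial (Fin N) (ZMod q)) (i : Fin N) (r : Fin N → ZMod q)
    (c : ZMod q) :
    (Spoly q F i r).eval c = ∑ b ∈ Bset N (i.val + 1),
      MvPolynomial.eval (fun j => if j.val < i.val then r j
        else if j = i then c else bval q (b j)) F := by
  rw [Spoly, Polynomial.eval_finset_sum]
  refine Finset.sum_congr rfl fun b _ => ?_
  have h := MvPolynomial.eval₂_comp_left (Polynomial.evalRingHom c) Polynomial.C
    (fun j => if j.val < i.val then Polynomial.C (r j)
      else if j = i then Polynomial.X else Polynomial.C (bval q (b j))) F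
  simp only [Polynomial.coe_evalRingHom] at h
  rw [h]
  have hC : (Polynomial.evalRingHom c).comp Polynomial.C = RingHom.id (ZMod q) := by
    ext x; simp
  rw [hC]
  rw [MvPolynomial.eval₂_id]
  have hpt : (Polynomial.eval c ∘ fun j : Fin N => if j.val < i.val then Polynomial.C (r j)
      else if j = i then Polynomial.X else Polynomial.C (bval q (b j)))
      = fun j => if j.val < i.val then r j else if j = i then c else bval q (b j) := by
    funext j
    by_cases h2 : j = i
    · subst h2; simp
    · by_cases h1 : j.val < i.val <;>
        simp only [Function.comp_apply, h1, h2, if_true, if_false, ite_true, ite_false,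
          Polynomial.eval_C, Polynomial.eval_X]
  rw [hpt]


lemma Spoly_eval_self (F : MvPolynomial (Fin N) (ZMod q)) (i : Fin N) (r : Fin N → ZMod q) :
    (Spoly q F i r).eval (r i) = Tval q F (i.val + 1) r := by
  rw [eval_Spoly, Tval]
  refine Finset.sum_congr rfl fun b _ => ?_
  refine evalpt F fun j => ?_
  by_cases h2 : j = i
  · subst h2; simp
  · have hji : j.val ≠ i.val := fun h => h2 (Fin.ext h)
    by_cases h1 : j.val < i.val
    · have : j.val < i.val + 1 := by omega
      simp [h1, h2, this]
    · have : ¬ j.val < i.val + 1 := by omega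
      simp [h1, h2, this]

lemma Bset_succ (i : Fin N) :
    (Bset N i.val).filter (fun b => b i = false) = Bset N (i.val + 1) := by
  ext b
  simp only [Bset, Finset.mem_filter, Finset.mem_univ, true_and]
  constructor
  · rintro ⟨h1, h2⟩ j hj
    rcases Nat.lt_or_ge j.val i.val with h | h
    · exact h1 j h
    · have : j = i := Fin.ext (by omega)
      subst this; exact h2
  · intro h
    exact ⟨fun j hj => h j (by omega), h i (by omega)⟩

lemma Spoly_eval_zero_add_one (F : MvPolynomial (Fin N) (ZMod q)) (i : Fin N)
    (r : Fin N → ZMod q) :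
    (Spoly q F i r).eval 0 + (Spoly q F i r).eval 1 = Tval q F i.val r := by
  rw [eval_Spoly, eval_Spoly, Tval]
  rw [← Finset.sum_filter_add_sum_filter_not (Bset N i.val) (fun b => b i = false)]
  congr 1
  · rw [Bset_succ]
    refine Finset.sum_congr rfl fun b hb => ?_
    have hbi : b i = false := by
      simp only [Bset, Finset.mem_filter, Finset.mem_univ, true_and] at hb
      exact hb i (by omega)
    refine (evalpt F fun j => ?_).symm
    by_cases h2 : j = i
    · subst h2; simp [hbi, bval]
    · by_cases h1 : j.val < i.val <;> simp [h1, h2]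
  · refine Finset.sum_nbij' (fun b => Function.update b i true)
      (fun b => Function.update b i false) ?_ ?_ ?_ ?_ ?_
    · intro b hb
      simp only [Bset, Finset.mem_filter, Finset.mem_univ, true_and,
        Bool.not_eq_false] at hb ⊢
      refine ⟨fun j hj => ?_, by simp⟩
      rw [Function.update_of_ne (fun hh => by subst hh; omega)]
      exact hb j (by omega)
    · intro b hb
      simp only [Bset, Finset.mem_filter, Finset.mem_univ, true_and,
        Bool.not_eq_false] at hb ⊢
      intro j hj
      rcases Nat.lt_or_ge j.val i.val with h | h
      · rw [Function.update_of_ne (fun hh => by subst hh; omega)]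
        exact hb.1 j h
      · have : j = i := Fin.ext (by omega)
        subst this; simp
    · intro b hb
      simp only [Bset, Finset.mem_filter, Finset.mem_univ, true_and] at hb
      funext j
      by_cases h2 : j = i
      · subst h2; simp [hb j (by omega)]
      · simp [Function.update_of_ne h2]
    · intro b hb
      simp only [Bset, Finset.mem_filter, Finset.mem_univ, true_and,
        Bool.not_eq_false] at hb
      funext j
      by_cases h2 : j = i
      · subst h2; simp [hb.2]
      · simp [Function.update_of_ne h2]
    · intro b hb
      simp only [Bset, Finset.mem_filter, Finset.mem_univ, true_and] at hb
      refine evalpt F fun j => ?_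
      by_cases h2 : j = i
      · subst h2; simp [bval]
      · have hji : j.val ≠ i.val := fun h => h2 (Fin.ext h)
        by_cases h1 : j.val < i.val <;>
          simp [h1, h2, Function.update_of_ne h2]

lemma Tval_zero (F : MvPolynomial (Fin N) (ZMod q)) (r : Fin N → ZMod q) :
    Tval q F 0 r = ∑ x : Fin N → Bool,
      MvPolynomial.eval (fun j => if x j then 1 else 0) F := by
  rw [Tval]
  have : Bset N 0 = Finset.univ := by
    ext b; simp [Bset]
  rw [this]
  refine Finset.sum_congr rfl fun b _ => ?_
  refine evalpt F fun j => ?_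
  simp [bval]

lemma Tval_N (F : MvPolynomial (Fin N) (ZMod q)) (r : Fin N → ZMod q) :
    Tval q F N r = MvPolynomial.eval r F := by
  rw [Tval]
  have : Bset N N = {fun _ => false} := by
    ext b
    simp only [Bset, Finset.mem_filter, Finset.mem_univ, true_and, Finset.mem_singleton]
    constructor
    · intro h; funext j; exact h j j.isLt
    · intro h j _; rw [h]
  rw [this, Finset.sum_singleton]
  refine evalpt F fun j => ?_
  simp [j.isLt]


lemma Spoly_natDegree (F : MvPolynomial (Fin N) (ZMod q))
    (hdeg : ∀ s ∈ F.support, ∀ j, s j ≤ d) (i : Fin N) (r : Fin N → ZMod q) :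
    (Spoly q F i r).natDegree ≤ d := by
  rw [Spoly]
  refine Polynomial.natDegree_sum_le_of_forall_le _ _ fun b _ => ?_
  rw [MvPolynomial.eval₂_eq]
  refine Polynomial.natDegree_sum_le_of_forall_le _ _ fun s hs => ?_
  refine le_trans (Polynomial.natDegree_C_mul_le _ _) ?_
  refine le_trans (Polynomial.natDegree_prod_le _ _) ?_
  have hterm : ∀ j ∈ s.support,
      ((if j.val < i.val then Polynomial.C (r j)
        else if j = i then Polynomial.X else Polynomial.C (bval q (b j))) ^ s j).natDegree
        ≤ if j = i then s i else 0 := by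
    intro j _
    by_cases h2 : j = i
    · subst h2
      by_cases h1 : j.val < j.val
      · omega
      · simp only [h1, if_false, ite_false, ite_true, if_true]
        refine le_trans Polynomial.natDegree_pow_le ?_
        have := Polynomial.natDegree_X_le (R := ZMod q)
        nlinarith
    · by_cases h1 : j.val < i.val <;>
        simp only [h1, h2, if_false, ite_false, ite_true, if_true] <;>
        · rw [← Polynomial.C_pow, Polynomial.natDegree_C]
  refine le_trans (Finset.sum_le_sum hterm) ?_
  rw [Finset.sum_ite_eq' s.support i (fun _ => s i)]
  split_ifs with h
  · exact hdeg s (by simpa using hs) i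
  · exact Nat.zero_le d

lemma Spoly_depends (F : MvPolynomial (Fin N) (ZMod q)) (i : Fin N)
    (r r' : Fin N → ZMod q) (h : ∀ j : Fin N, j.val < i.val → r j = r' j) :
    Spoly q F i r = Spoly q F i r' := by
  rw [Spoly, Spoly]
  refine Finset.sum_congr rfl fun b _ => ?_
  congr 1
  funext j
  by_cases h1 : j.val < i.val <;> simp [h1, h j]


lemma card_zero_coord [NeZero q] (i : Fin N) :
    (Finset.univ.filter (fun t : Fin N → ZMod q => t i = 0)).card = q ^ (N - 1) := by
  classical
  have e : {t : Fin N → ZMod q // t i = 0} ≃ ({j : Fin N // j ≠ i} → ZMod q) :=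
    { toFun := fun t j => t.1 j.1
      invFun := fun s => ⟨fun j => if h : j = i then 0 else s ⟨j, h⟩, by simp⟩
      left_inv := by
        intro t; ext j
        by_cases h : j = i
        · subst h; simp [t.2]
        · simp [h]
      right_inv := by
        intro s; funext j
        simp [j.2] }
  have h1 : (Finset.univ.filter (fun t : Fin N → ZMod q => t i = 0)).card
      = Fintype.card {t : Fin N → ZMod q // t i = 0} := (Fintype.card_subtype _).symm
  rw [h1, Fintype.card_congr e, Fintype.card_fun, ZMod.card]
  congr 1
  have : Fintype.card {j : Fin N // j ≠ i} = N - 1 := by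
    rw [Fintype.card_subtype_compl, Fintype.card_subtype_eq, Fintype.card_fin]
  rw [this]

lemma card_bad [Fact (Nat.Prime q)] (i : Fin N) (p : (Fin N → ZMod q) → Polynomial (ZMod q))
    (hp : ∀ r x, p (Function.update r i x) = p r)
    (hd : ∀ r, (p r).natDegree ≤ d) :
    (Finset.univ.filter (fun r : Fin N → ZMod q => p r ≠ 0 ∧ (p r).eval (r i) = 0)).card
      ≤ d * q ^ (N - 1) := by
  classical
  haveI : NeZero q := ⟨(Fact.out : Nat.Prime q).ne_zero⟩
  set s := Finset.univ.filter
    (fun r : Fin N → ZMod q => p r ≠ 0 ∧ (p r).eval (r i) = 0) with hs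
  set t := Finset.univ.filter (fun u : Fin N → ZMod q => u i = 0) with ht
  have hmem : ∀ r ∈ s, Function.update r i 0 ∈ t := by
    intro r _
    simp [ht]
  rw [Finset.card_eq_sum_card_fiberwise hmem]
  have hfiber : ∀ u ∈ t, (s.filter (fun r => Function.update r i 0 = u)).card ≤ d := by
    intro u _
    have hru : ∀ r ∈ s.filter (fun r => Function.update r i 0 = u), p r = p u := by
      intro r hr
      simp only [hs, Finset.mem_filter] at hr
      rw [← hr.2, hp r 0]
    by_cases h0 : p u = 0
    · have hempty : s.filter (fun r => Function.update r i 0 = u) = ∅ := by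
        rw [Finset.filter_eq_empty_iff]
        intro r hr hu
        have hr' : r ∈ s.filter (fun r => Function.update r i 0 = u) :=
          Finset.mem_filter.2 ⟨hr, hu⟩
        have := hru r hr'
        simp only [hs, Finset.mem_filter] at hr
        exact hr.2.1 (this.trans h0)
      rw [hempty]; simp
    · refine le_trans (Finset.card_le_card_of_injOn (t := (p u).roots.toFinset) (fun r => r i)
        (fun r hr => ?_) ?_) ?_
      · -- maps into roots
        have hpr := hru r hr
        simp only [hs, Finset.mem_coe, Finset.mem_filter] at hr
        rw [Finset.mem_coe, Multiset.mem_toFinset, Polynomial.mem_roots h0]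
        rw [← hpr]
        exact hr.1.2.2
      · intro r hr r' hr' hii
        simp only [Finset.coe_filter, Set.mem_setOf_eq] at hr hr'
        funext j
        by_cases hj : j = i
        · subst hj; exact hii
        · have e1 := congrFun hr.2 j
          have e2 := congrFun hr'.2 j
          rw [Function.update_of_ne hj] at e1 e2
          rw [e1, e2]
      · refine le_trans (Multiset.toFinset_card_le _) ?_
        refine le_trans (Polynomial.card_roots' _) (hd u)
  refine le_trans (Finset.sum_le_sum hfiber) ?_
  rw [Finset.sum_const, smul_eq_mul, ht, card_zero_coord i, Nat.mul_comm]

end Dev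

/-- Sumcheck soundness: let `F` be an `N`-variate polynomial over `F_q`
whose degree in each variable is at most `d`, and let `a ∈ F_q` with
`Σ_{x ∈ {0,1}^N} F(x) ≠ a`. Then for every prover strategy
`g_i : F_q^{i−1} → {univariate polynomials of degree ≤ d}`, the probability over a
uniformly random `(r₁,…,r_N) ∈ F_q^N` that all verifier checks pass is at most `N·d/q`. -/
theorem stmt_16 (q N d : ℕ) [Fact (Nat.Prime q)] (hN : 1 ≤ N)
    (F : MvPolynomial (Fin N) (ZMod q))
    (hdeg : ∀ s ∈ F.support, ∀ j, s j ≤ d)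
    (a : ZMod q)
    (ha : ∑ x : Fin N → Bool,
        MvPolynomial.eval (fun j => if x j then 1 else 0) F ≠ a)
    (g : (i : Fin N) → (Fin i.val → ZMod q) → Polynomial (ZMod q))
    (hg : ∀ i pre, (g i pre).natDegree ≤ d) :
    ((Finset.univ.filter (fun r : Fin N → ZMod q =>
        ((g ⟨0, hN⟩ fun j => r ⟨j.val, lt_trans j.isLt hN⟩).eval 0 +
            (g ⟨0, hN⟩ fun j => r ⟨j.val, lt_trans j.isLt hN⟩).eval 1 = a) ∧
        (∀ i : Fin N, 0 < i.val →
          (g i fun j => r ⟨j.val, lt_trans j.isLt i.isLt⟩).eval 0 +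
              (g i fun j => r ⟨j.val, lt_trans j.isLt i.isLt⟩).eval 1 =
            (g ⟨i.val - 1, Nat.lt_of_le_of_lt (Nat.sub_le _ _) i.isLt⟩
                fun j => r ⟨j.val,
                  lt_trans j.isLt (Nat.lt_of_le_of_lt (Nat.sub_le _ _) i.isLt)⟩).eval
              (r ⟨i.val - 1, Nat.lt_of_le_of_lt (Nat.sub_le _ _) i.isLt⟩)) ∧
        ((g ⟨N - 1, Nat.sub_lt hN Nat.one_pos⟩
            fun j => r ⟨j.val, lt_trans j.isLt (Nat.sub_lt hN Nat.one_pos)⟩).eval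
              (r ⟨N - 1, Nat.sub_lt hN Nat.one_pos⟩)
          = MvPolynomial.eval r F))).card : ℝ) / (q : ℝ) ^ N
      ≤ (N : ℝ) * (d : ℝ) / (q : ℝ) := by
  classical
  -- the difference polynomial for round `i`
  set pf : (i : Fin N) → (Fin N → ZMod q) → Polynomial (ZMod q) :=
    fun i r => g i (fun j => r ⟨j.val, lt_trans j.isLt i.isLt⟩) - Spoly q F i r with hpf
  -- pointwise: if all checks pass then some round is bad
  have pointwise : ∀ r : Fin N → ZMod q,
      ((g ⟨0, hN⟩ fun j => r ⟨j.val, lt_trans j.isLt hN⟩).eval 0 +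
          (g ⟨0, hN⟩ fun j => r ⟨j.val, lt_trans j.isLt hN⟩).eval 1 = a) →
      (∀ i : Fin N, 0 < i.val →
          (g i fun j => r ⟨j.val, lt_trans j.isLt i.isLt⟩).eval 0 +
              (g i fun j => r ⟨j.val, lt_trans j.isLt i.isLt⟩).eval 1 =
            (g ⟨i.val - 1, Nat.lt_of_le_of_lt (Nat.sub_le _ _) i.isLt⟩
                fun j => r ⟨j.val,
                  lt_trans j.isLt (Nat.lt_of_le_of_lt (Nat.sub_le _ _) i.isLt)⟩).eval
              (r ⟨i.val - 1, Nat.lt_of_le_of_lt (Nat.sub_le _ _) i.isLt⟩)) →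
      ((g ⟨N - 1, Nat.sub_lt hN Nat.one_pos⟩
            fun j => r ⟨j.val, lt_trans j.isLt (Nat.sub_lt hN Nat.one_pos)⟩).eval
              (r ⟨N - 1, Nat.sub_lt hN Nat.one_pos⟩)
          = MvPolynomial.eval r F) →
      ∃ i : Fin N, pf i r ≠ 0 ∧ (pf i r).eval (r i) = 0 := by
    intro r hc1 hc2 hc3
    by_contra hno
    push_neg at hno
    have h' : ∀ i : Fin N,
        g i (fun j => r ⟨j.val, lt_trans j.isLt i.isLt⟩) ≠ Spoly q F i r →
        (g i fun j => r ⟨j.val, lt_trans j.isLt i.isLt⟩).eval (r i)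
          ≠ (Spoly q F i r).eval (r i) := by
      intro i hne heq
      have h1 : pf i r ≠ 0 := sub_ne_zero_of_ne hne
      have h2 : (pf i r).eval (r i) = 0 := by
        rw [hpf]; simp only [Polynomial.eval_sub]
        rw [heq, sub_self]
      exact (hno i h1) h2
    have claim : ∀ k : ℕ, ∀ i : Fin N, i.val = k →
        (g i fun j => r ⟨j.val, lt_trans j.isLt i.isLt⟩).eval (r i)
          ≠ Tval q F (i.val + 1) r := by
      intro k
      induction k with
      | zero =>
        intro i hi
        have hi0 : i = ⟨0, hN⟩ := Fin.ext hi
        subst hi0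
        have key : g ⟨0, hN⟩
            (fun j => r ⟨j.val, lt_trans j.isLt (Fin.isLt ⟨0, hN⟩)⟩)
            ≠ Spoly q F ⟨0, hN⟩ r := by
          intro heq
          apply ha
          have e1 := Spoly_eval_zero_add_one (q := q) F ⟨0, hN⟩ r
          rw [← heq] at e1
          rw [Tval_zero] at e1
          rw [← e1]
          exact hc1
        have hne := h' ⟨0, hN⟩ key
        intro hTeq
        apply hne
        rw [Spoly_eval_self]
        exact hTeq
      | succ k ih =>
        intro i hi
        have hk' : i.val - 1 = k := by omega
        have hpos : 0 < i.val := by omega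
        have IH := ih ⟨i.val - 1, Nat.lt_of_le_of_lt (Nat.sub_le _ _) i.isLt⟩ hk'
        have hcheck := hc2 i hpos
        have key : g i (fun j => r ⟨j.val, lt_trans j.isLt i.isLt⟩)
            ≠ Spoly q F i r := by
          intro heq
          rw [heq, Spoly_eval_zero_add_one] at hcheck
          apply IH
          have : (⟨i.val - 1, Nat.lt_of_le_of_lt (Nat.sub_le _ _) i.isLt⟩ : Fin N).val + 1
              = i.val := by
            simp only []
            omega
          rw [this]
          exact hcheck.symm
        have hne := h' i key
        intro hTeq
        apply hne
        rw [Spoly_eval_self]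
        exact hTeq
    have final := claim (N - 1) ⟨N - 1, Nat.sub_lt hN Nat.one_pos⟩ rfl
    apply final
    have hNval : (⟨N - 1, Nat.sub_lt hN Nat.one_pos⟩ : Fin N).val + 1 = N := by
      simp only []
      omega
    rw [hNval, Tval_N]
    exact hc3
  -- counting
  set accept := (Finset.univ.filter (fun r : Fin N → ZMod q =>
        ((g ⟨0, hN⟩ fun j => r ⟨j.val, lt_trans j.isLt hN⟩).eval 0 +
            (g ⟨0, hN⟩ fun j => r ⟨j.val, lt_trans j.isLt hN⟩).eval 1 = a) ∧
        (∀ i : Fin N, 0 < i.val →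
          (g i fun j => r ⟨j.val, lt_trans j.isLt i.isLt⟩).eval 0 +
              (g i fun j => r ⟨j.val, lt_trans j.isLt i.isLt⟩).eval 1 =
            (g ⟨i.val - 1, Nat.lt_of_le_of_lt (Nat.sub_le _ _) i.isLt⟩
                fun j => r ⟨j.val,
                  lt_trans j.isLt (Nat.lt_of_le_of_lt (Nat.sub_le _ _) i.isLt)⟩).eval
              (r ⟨i.val - 1, Nat.lt_of_le_of_lt (Nat.sub_le _ _) i.isLt⟩)) ∧
        ((g ⟨N - 1, Nat.sub_lt hN Nat.one_pos⟩
            fun j => r ⟨j.val, lt_trans j.isLt (Nat.sub_lt hN Nat.one_pos)⟩).eval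
              (r ⟨N - 1, Nat.sub_lt hN Nat.one_pos⟩)
          = MvPolynomial.eval r F))) with haccept
  have hsubset : accept ⊆ Finset.univ.biUnion (fun i : Fin N =>
      Finset.univ.filter (fun r : Fin N → ZMod q =>
        pf i r ≠ 0 ∧ (pf i r).eval (r i) = 0)) := by
    intro r hr
    rw [haccept, Finset.mem_filter] at hr
    obtain ⟨-, hc1, hc2, hc3⟩ := hr
    obtain ⟨i, hi1, hi2⟩ := pointwise r hc1 hc2 hc3
    exact Finset.mem_biUnion.2 ⟨i, Finset.mem_univ i,
      Finset.mem_filter.2 ⟨Finset.mem_univ r, hi1, hi2⟩⟩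
  have hcardN : accept.card ≤ N * (d * q ^ (N - 1)) := by
    refine le_trans (Finset.card_le_card hsubset) ?_
    refine le_trans (Finset.card_biUnion_le) ?_
    have hbound : ∀ i : Fin N,
        (Finset.univ.filter (fun r : Fin N → ZMod q =>
          pf i r ≠ 0 ∧ (pf i r).eval (r i) = 0)).card ≤ d * q ^ (N - 1) := by
      intro i
      refine card_bad i (pf i) ?_ ?_
      · intro r x
        rw [hpf]
        simp only []
        congr 1
        · congr 1
          funext j
          rw [Function.update_of_ne]
          intro hh
          have : j.val = i.val := congrArg Fin.val hh
          omega
        · refine Spoly_depends F i _ _ fun j hj => ?_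
          rw [Function.update_of_ne]
          intro hh
          have := congrArg Fin.val hh
          omega
      · intro r
        refine le_trans (Polynomial.natDegree_sub_le _ _) ?_
        exact max_le (hg _ _) (Spoly_natDegree F hdeg i r)
    refine le_trans (Finset.sum_le_sum fun i _ => hbound i) ?_
    rw [Finset.sum_const, Finset.card_univ, Fintype.card_fin, smul_eq_mul]
  -- real arithmetic
  have hq2 : 2 ≤ q := (Fact.out : Nat.Prime q).two_le
  have hq0 : (0 : ℝ) < (q : ℝ) := by positivity
  have hqN0 : (0 : ℝ) < (q : ℝ) ^ N := by positivity
  rw [div_le_div_iff₀ hqN0 hq0]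
  have hcast : (accept.card : ℝ) ≤ (N : ℝ) * ((d : ℝ) * (q : ℝ) ^ (N - 1)) := by
    exact_mod_cast hcardN
  have hqpow : (q : ℝ) ^ N = (q : ℝ) ^ (N - 1) * (q : ℝ) := by
    rw [← pow_succ]
    congr 1
    omega
  calc (accept.card : ℝ) * (q : ℝ)
      ≤ ((N : ℝ) * ((d : ℝ) * (q : ℝ) ^ (N - 1))) * (q : ℝ) :=
        mul_le_mul_of_nonneg_right hcast (le_of_lt hq0)
    _ = (N : ℝ) * (d : ℝ) * ((q : ℝ) ^ (N - 1) * (q : ℝ)) := by ring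
    _ = (N : ℝ) * (d : ℝ) * (q : ℝ) ^ N := by rw [hqpow]
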